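/- Let a, b, c be reals with 2c = a + b and b ≠ a, and let p_d, p_g be probability densities on ℝⁿ with p_d + p_g > 0 a.e. Then ∫ (p_d(D*−c)² + p_g(D*−c)²) dx = ((b−a)²/4) ∫ (2p_g − (p_d + p_g))² / (p_d + p_g) dx, where D* = (b·p_d + a·p_g)/(p_d + p_g). This integral is nonnegative and equals 0 iff p_g = p_d a.e. -/
import Mathlib


open MeasureTheory

theorem stmt_10 {n : ℕ} (pd pg : (Fin n → ℝ) → ℝ) (a b c : ℝ)
    (hc : 2 * c = a + b) (hab : b ≠ a)
    (hpd0 : ∀ x, 0 ≤ pd x) (hpg0 : ∀ x, 0 ≤ pg x)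
    (hpdm : Measurable pd) (hpgm : Measurable pg)
    (hpdi : Integrable pd volume) (hpgi : Integrable pg volume)
    (hpd1 : ∫ x, pd x = 1) (hpg1 : ∫ x, pg x = 1)
    (hpos : ∀ᵐ x ∂volume, 0 < pd x + pg x)
    (hint : Integrable (fun x => (2 * pg x - (pd x + pg x)) ^ 2 / (pd x + pg x)) volume)
    (Dstar : (Fin n → ℝ) → ℝ)
    (hD : ∀ x, Dstar x = (b * pd x + a * pg x) / (pd x + pg x)) :
    (∫ x, (pd x * (Dstar x - c) ^ 2 + pg x * (Dstar x - c) ^ 2)) =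
        ((b - a) ^ 2 / 4) * ∫ x, (2 * pg x - (pd x + pg x)) ^ 2 / (pd x + pg x) ∧
      0 ≤ ∫ x, (2 * pg x - (pd x + pg x)) ^ 2 / (pd x + pg x) ∧
      ((∫ x, (2 * pg x - (pd x + pg x)) ^ 2 / (pd x + pg x)) = 0 ↔ pg =ᵐ[volume] pd) := by
  have hc' : c = (a + b) / 2 := by linarith
  subst hc'
  have hnn : ∀ᵐ x ∂volume, 0 ≤ (2 * pg x - (pd x + pg x)) ^ 2 / (pd x + pg x) := by
    filter_upwards [hpos] with x hx
    exact div_nonneg (sq_nonneg _) hx.le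
  have key : ∀ᵐ x ∂volume,
      pd x * (Dstar x - (a + b) / 2) ^ 2 + pg x * (Dstar x - (a + b) / 2) ^ 2 =
        ((b - a) ^ 2 / 4) * ((2 * pg x - (pd x + pg x)) ^ 2 / (pd x + pg x)) := by
    filter_upwards [hpos] with x hx
    have hs : pd x + pg x ≠ 0 := ne_of_gt hx
    rw [hD]
    field_simp
    ring
  refine ⟨?_, ?_, ?_⟩
  · rw [integral_congr_ae key, integral_const_mul _ _]
  · exact integral_nonneg_of_ae hnn
  · rw [integral_eq_zero_iff_of_nonneg_ae hnn hint]
    constructor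
    · intro h
      filter_upwards [h, hpos] with x hx hs
      have hs' : pd x + pg x ≠ 0 := ne_of_gt hs
      have := (div_eq_zero_iff.mp hx).resolve_right hs'
      have h2 : 2 * pg x - (pd x + pg x) = 0 := by
        exact pow_eq_zero_iff (by norm_num) |>.mp this
      linarith
    · intro h
      filter_upwards [h] with x hx
      simp [hx]
      ring_nf
      simp
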